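/- For every positive integer t with t ≡ 131 (mod 2730) or t ≡ 1361 (mod 2730), the integer 659·(2^{12t} − 1)/(2^{12} − 1) (the 2-repstring consisting of the 10-bit binary string of 659 followed by two zeros, repeated t times) is a Sierpiński number. -/
import Mathlib


/-- A number is composite if it is a product of two integers greater than 1. -/
def IsComposite (n : ℕ) : Prop := ∃ a b : ℕ, 1 < a ∧ 1 < b ∧ n = a * b

/-- A Sierpiński number is an odd positive integer `k` such that `k·2^n + 1` is composite
for every positive integer `n`. -/
def IsSierpinski (k : ℕ) : Prop := 0 < k ∧ Odd k ∧ ∀ n : ℕ, 0 < n → IsComposite (k * 2 ^ n + 1)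


/-- For every positive integer `t` with `t ≡ 131 (mod 2730)` or
`t ≡ 1361 (mod 2730)`, the integer `659·(2^{12t} − 1)/(2^{12} − 1)` (the 2-repstring
consisting of the 10-bit binary string of 659 followed by two zeros, repeated `t` times)
is a Sierpiński number. -/

lemma geom_aux (u : ℕ) : 4095 * (∑ i ∈ Finset.range u, 4096^i) = 4096^u - 1 := by
  induction u with
  | zero => simp
  | succ u ih =>
    have h1 : 1 ≤ 4096 ^ u := Nat.one_le_pow _ _ (by norm_num)
    rw [Finset.sum_range_succ, pow_succ]
    generalize 4096 ^ u = x at *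
    generalize (∑ i ∈ Finset.range u, 4096^i) = y at *
    omega

lemma sum_mod_4095 (u : ℕ) : (∑ i ∈ Finset.range u, 4096^i) % 4095 = u % 4095 := by
  induction u with
  | zero => simp
  | succ u ih =>
    have hp : 4096^u % 4095 = 1 := by rw [Nat.pow_mod]; norm_num
    rw [Finset.sum_range_succ]
    generalize (4096:ℕ)^u = x at hp ⊢
    omega

lemma pow_even_mod_4097 (j : ℕ) : 4096^(2*j) % 4097 = 1 := by
  rw [pow_mul, Nat.pow_mod]; norm_num

lemma sum_odd_mod_4097 (m : ℕ) : (∑ i ∈ Finset.range (2*m+1), 4096^i) % 4097 = 1 := by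
  induction m with
  | zero => simp
  | succ m ih =>
    have e : 2*(m+1)+1 = (2*m+1) + 1 + 1 := by ring
    rw [e, Finset.sum_range_succ, Finset.sum_range_succ]
    have h1 : 4096^(2*m+1) % 4097 = 4096 := by
      rw [pow_succ, Nat.mul_mod, pow_even_mod_4097]
    have h2 : 4096^(2*m+1+1) % 4097 = 1 := by
      have e2 : 2*m+1+1 = 2*(m+1) := by ring
      rw [e2]; exact pow_even_mod_4097 (m+1)
    generalize (4096:ℕ)^(2*m+1) = x at h1 ⊢
    generalize (4096:ℕ)^(2*m+1+1) = y at h2 ⊢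
    omega

lemma composite_step {K A p kc ac : ℕ} (hp : 1 < p) (hK : K % p = kc)
    (hA : A % p = ac) (hdiv : (kc * ac + 1) % p = 0) (hbig : p * 2 ≤ K * A + 1) :
    IsComposite (K * A + 1) := by
  have h1 : K * A + 1 ≡ K % p * (A % p) + 1 [MOD p] :=
    ((Nat.mod_modEq K p).symm.mul (Nat.mod_modEq A p).symm).add_right 1
  rw [hK, hA] at h1
  have hmod : (K * A + 1) % p = 0 :=
    (show (K * A + 1) % p = (kc * ac + 1) % p from h1).trans hdiv
  obtain ⟨m, hm⟩ := Nat.dvd_of_mod_eq_zero hmod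
  rw [hm] at hbig
  have h2m : 2 ≤ m := Nat.le_of_mul_le_mul_left hbig (by omega)
  exact ⟨p, m, hp, by omega, hm⟩


set_option maxHeartbeats 1000000 in
lemma sierpinski_core (S t : ℕ) (hSpos : 1 ≤ S) (hS2 : S % 2 = 1)
    (hm1 : S % 4095 = t % 4095) (hm2 : S % 4097 = 1)
    (hmod : t % 2730 = 131 ∨ t % 2730 = 1361) :
    IsSierpinski (659 * S) := by
  refine ⟨by omega, Nat.odd_iff.mpr (by clear * - hS2; omega), ?_⟩
  rcases hmod with ht' | ht'
  · have hK3 : (659 * S) % 3 = 1 := by clear * - hm1 ht'; omega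
    have hK5 : (659 * S) % 5 = 4 := by clear * - hm1 ht'; omega
    have hK7 : (659 * S) % 7 = 5 := by clear * - hm1 ht'; omega
    have hK13 : (659 * S) % 13 = 9 := by clear * - hm1 ht'; omega
    have hK17 : (659 * S) % 17 = 13 := by clear * - hm2; omega
    have hK241 : (659 * S) % 241 = 177 := by clear * - hm2; omega
    intro n hn
    have hNbig : 1319 ≤ 659 * S * 2^n + 1 := by
      have h1 : 659 * 1 ≤ 659 * S := Nat.mul_le_mul_left _ hSpos
      have h2 : 2^1 ≤ 2^n := Nat.pow_le_pow_right (by norm_num) hn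
      have := Nat.mul_le_mul h1 h2
      linarith
    have h2 : 2^n % 16777215 = 2^(n % 24) % 16777215 := by
      conv_lhs => rw [← Nat.div_add_mod n 24]
      rw [pow_add, pow_mul, Nat.mul_mod, Nat.pow_mod]
      norm_num [Nat.mod_mod_of_dvd]
    have h24 : n % 24 = 0 ∨ n % 24 = 1 ∨ n % 24 = 2 ∨ n % 24 = 3 ∨ n % 24 = 4 ∨ n % 24 = 5 ∨ n % 24 = 6 ∨ n % 24 = 7 ∨ n % 24 = 8 ∨ n % 24 = 9 ∨ n % 24 = 10 ∨ n % 24 = 11 ∨ n % 24 = 12 ∨ n % 24 = 13 ∨ n % 24 = 14 ∨ n % 24 = 15 ∨ n % 24 = 16 ∨ n % 24 = 17 ∨ n % 24 = 18 ∨ n % 24 = 19 ∨ n % 24 = 20 ∨ n % 24 = 21 ∨ n % 24 = 22 ∨ n % 24 = 23 := by clear * - ; omega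
    rcases h24 with h|h|h|h|h|h|h|h|h|h|h|h|h|h|h|h|h|h|h|h|h|h|h|h
    · rw [h] at h2; norm_num at h2
      exact composite_step (p := 5) (kc := 4) (ac := 1) (by norm_num) hK5 (by clear * - h2; omega) (by norm_num) (le_trans (by norm_num) hNbig)
    · rw [h] at h2; norm_num at h2
      exact composite_step (p := 3) (kc := 1) (ac := 2) (by norm_num) hK3 (by clear * - h2; omega) (by norm_num) (le_trans (by norm_num) hNbig)
    · rw [h] at h2; norm_num at h2
      exact composite_step (p := 7) (kc := 5) (ac := 4) (by norm_num) hK7 (by clear * - h2; omega) (by norm_num) (le_trans (by norm_num) hNbig)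
    · rw [h] at h2; norm_num at h2
      exact composite_step (p := 3) (kc := 1) (ac := 2) (by norm_num) hK3 (by clear * - h2; omega) (by norm_num) (le_trans (by norm_num) hNbig)
    · rw [h] at h2; norm_num at h2
      exact composite_step (p := 5) (kc := 4) (ac := 1) (by norm_num) hK5 (by clear * - h2; omega) (by norm_num) (le_trans (by norm_num) hNbig)
    · rw [h] at h2; norm_num at h2
      exact composite_step (p := 3) (kc := 1) (ac := 2) (by norm_num) hK3 (by clear * - h2; omega) (by norm_num) (le_trans (by norm_num) hNbig)
    · rw [h] at h2; norm_num at h2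
      exact composite_step (p := 17) (kc := 13) (ac := 13) (by norm_num) hK17 (by clear * - h2; omega) (by norm_num) (le_trans (by norm_num) hNbig)
    · rw [h] at h2; norm_num at h2
      exact composite_step (p := 3) (kc := 1) (ac := 2) (by norm_num) hK3 (by clear * - h2; omega) (by norm_num) (le_trans (by norm_num) hNbig)
    · rw [h] at h2; norm_num at h2
      exact composite_step (p := 5) (kc := 4) (ac := 1) (by norm_num) hK5 (by clear * - h2; omega) (by norm_num) (le_trans (by norm_num) hNbig)
    · rw [h] at h2; norm_num at h2
      exact composite_step (p := 3) (kc := 1) (ac := 2) (by norm_num) hK3 (by clear * - h2; omega) (by norm_num) (le_trans (by norm_num) hNbig)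
    · rw [h] at h2; norm_num at h2
      exact composite_step (p := 13) (kc := 9) (ac := 10) (by norm_num) hK13 (by clear * - h2; omega) (by norm_num) (le_trans (by norm_num) hNbig)
    · rw [h] at h2; norm_num at h2
      exact composite_step (p := 3) (kc := 1) (ac := 2) (by norm_num) hK3 (by clear * - h2; omega) (by norm_num) (le_trans (by norm_num) hNbig)
    · rw [h] at h2; norm_num at h2
      exact composite_step (p := 5) (kc := 4) (ac := 1) (by norm_num) hK5 (by clear * - h2; omega) (by norm_num) (le_trans (by norm_num) hNbig)
    · rw [h] at h2; norm_num at h2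
      exact composite_step (p := 3) (kc := 1) (ac := 2) (by norm_num) hK3 (by clear * - h2; omega) (by norm_num) (le_trans (by norm_num) hNbig)
    · rw [h] at h2; norm_num at h2
      exact composite_step (p := 7) (kc := 5) (ac := 4) (by norm_num) hK7 (by clear * - h2; omega) (by norm_num) (le_trans (by norm_num) hNbig)
    · rw [h] at h2; norm_num at h2
      exact composite_step (p := 3) (kc := 1) (ac := 2) (by norm_num) hK3 (by clear * - h2; omega) (by norm_num) (le_trans (by norm_num) hNbig)
    · rw [h] at h2; norm_num at h2
      exact composite_step (p := 5) (kc := 4) (ac := 1) (by norm_num) hK5 (by clear * - h2; omega) (by norm_num) (le_trans (by norm_num) hNbig)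
    · rw [h] at h2; norm_num at h2
      exact composite_step (p := 3) (kc := 1) (ac := 2) (by norm_num) hK3 (by clear * - h2; omega) (by norm_num) (le_trans (by norm_num) hNbig)
    · rw [h] at h2; norm_num at h2
      exact composite_step (p := 241) (kc := 177) (ac := 177) (by norm_num) hK241 (by clear * - h2; omega) (by norm_num) (le_trans (by norm_num) hNbig)
    · rw [h] at h2; norm_num at h2
      exact composite_step (p := 3) (kc := 1) (ac := 2) (by norm_num) hK3 (by clear * - h2; omega) (by norm_num) (le_trans (by norm_num) hNbig)
    · rw [h] at h2; norm_num at h2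
      exact composite_step (p := 5) (kc := 4) (ac := 1) (by norm_num) hK5 (by clear * - h2; omega) (by norm_num) (le_trans (by norm_num) hNbig)
    · rw [h] at h2; norm_num at h2
      exact composite_step (p := 3) (kc := 1) (ac := 2) (by norm_num) hK3 (by clear * - h2; omega) (by norm_num) (le_trans (by norm_num) hNbig)
    · rw [h] at h2; norm_num at h2
      exact composite_step (p := 13) (kc := 9) (ac := 10) (by norm_num) hK13 (by clear * - h2; omega) (by norm_num) (le_trans (by norm_num) hNbig)
    · rw [h] at h2; norm_num at h2
      exact composite_step (p := 3) (kc := 1) (ac := 2) (by norm_num) hK3 (by clear * - h2; omega) (by norm_num) (le_trans (by norm_num) hNbig)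
  · have hK3 : (659 * S) % 3 = 1 := by clear * - hm1 ht'; omega
    have hK5 : (659 * S) % 5 = 4 := by clear * - hm1 ht'; omega
    have hK7 : (659 * S) % 7 = 3 := by clear * - hm1 ht'; omega
    have hK13 : (659 * S) % 13 = 3 := by clear * - hm1 ht'; omega
    have hK17 : (659 * S) % 17 = 13 := by clear * - hm2; omega
    have hK241 : (659 * S) % 241 = 177 := by clear * - hm2; omega
    intro n hn
    have hNbig : 1319 ≤ 659 * S * 2^n + 1 := by
      have h1 : 659 * 1 ≤ 659 * S := Nat.mul_le_mul_left _ hSpos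
      have h2 : 2^1 ≤ 2^n := Nat.pow_le_pow_right (by norm_num) hn
      have := Nat.mul_le_mul h1 h2
      linarith
    have h2 : 2^n % 16777215 = 2^(n % 24) % 16777215 := by
      conv_lhs => rw [← Nat.div_add_mod n 24]
      rw [pow_add, pow_mul, Nat.mul_mod, Nat.pow_mod]
      norm_num [Nat.mod_mod_of_dvd]
    have h24 : n % 24 = 0 ∨ n % 24 = 1 ∨ n % 24 = 2 ∨ n % 24 = 3 ∨ n % 24 = 4 ∨ n % 24 = 5 ∨ n % 24 = 6 ∨ n % 24 = 7 ∨ n % 24 = 8 ∨ n % 24 = 9 ∨ n % 24 = 10 ∨ n % 24 = 11 ∨ n % 24 = 12 ∨ n % 24 = 13 ∨ n % 24 = 14 ∨ n % 24 = 15 ∨ n % 24 = 16 ∨ n % 24 = 17 ∨ n % 24 = 18 ∨ n % 24 = 19 ∨ n % 24 = 20 ∨ n % 24 = 21 ∨ n % 24 = 22 ∨ n % 24 = 23 := by clear * - ; omega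
    rcases h24 with h|h|h|h|h|h|h|h|h|h|h|h|h|h|h|h|h|h|h|h|h|h|h|h
    · rw [h] at h2; norm_num at h2
      exact composite_step (p := 5) (kc := 4) (ac := 1) (by norm_num) hK5 (by clear * - h2; omega) (by norm_num) (le_trans (by norm_num) hNbig)
    · rw [h] at h2; norm_num at h2
      exact composite_step (p := 3) (kc := 1) (ac := 2) (by norm_num) hK3 (by clear * - h2; omega) (by norm_num) (le_trans (by norm_num) hNbig)
    · rw [h] at h2; norm_num at h2
      exact composite_step (p := 13) (kc := 3) (ac := 4) (by norm_num) hK13 (by clear * - h2; omega) (by norm_num) (le_trans (by norm_num) hNbig)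
    · rw [h] at h2; norm_num at h2
      exact composite_step (p := 3) (kc := 1) (ac := 2) (by norm_num) hK3 (by clear * - h2; omega) (by norm_num) (le_trans (by norm_num) hNbig)
    · rw [h] at h2; norm_num at h2
      exact composite_step (p := 5) (kc := 4) (ac := 1) (by norm_num) hK5 (by clear * - h2; omega) (by norm_num) (le_trans (by norm_num) hNbig)
    · rw [h] at h2; norm_num at h2
      exact composite_step (p := 3) (kc := 1) (ac := 2) (by norm_num) hK3 (by clear * - h2; omega) (by norm_num) (le_trans (by norm_num) hNbig)
    · rw [h] at h2; norm_num at h2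
      exact composite_step (p := 17) (kc := 13) (ac := 13) (by norm_num) hK17 (by clear * - h2; omega) (by norm_num) (le_trans (by norm_num) hNbig)
    · rw [h] at h2; norm_num at h2
      exact composite_step (p := 3) (kc := 1) (ac := 2) (by norm_num) hK3 (by clear * - h2; omega) (by norm_num) (le_trans (by norm_num) hNbig)
    · rw [h] at h2; norm_num at h2
      exact composite_step (p := 5) (kc := 4) (ac := 1) (by norm_num) hK5 (by clear * - h2; omega) (by norm_num) (le_trans (by norm_num) hNbig)
    · rw [h] at h2; norm_num at h2
      exact composite_step (p := 3) (kc := 1) (ac := 2) (by norm_num) hK3 (by clear * - h2; omega) (by norm_num) (le_trans (by norm_num) hNbig)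
    · rw [h] at h2; norm_num at h2
      exact composite_step (p := 7) (kc := 3) (ac := 2) (by norm_num) hK7 (by clear * - h2; omega) (by norm_num) (le_trans (by norm_num) hNbig)
    · rw [h] at h2; norm_num at h2
      exact composite_step (p := 3) (kc := 1) (ac := 2) (by norm_num) hK3 (by clear * - h2; omega) (by norm_num) (le_trans (by norm_num) hNbig)
    · rw [h] at h2; norm_num at h2
      exact composite_step (p := 5) (kc := 4) (ac := 1) (by norm_num) hK5 (by clear * - h2; omega) (by norm_num) (le_trans (by norm_num) hNbig)
    · rw [h] at h2; norm_num at h2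
      exact composite_step (p := 3) (kc := 1) (ac := 2) (by norm_num) hK3 (by clear * - h2; omega) (by norm_num) (le_trans (by norm_num) hNbig)
    · rw [h] at h2; norm_num at h2
      exact composite_step (p := 13) (kc := 3) (ac := 4) (by norm_num) hK13 (by clear * - h2; omega) (by norm_num) (le_trans (by norm_num) hNbig)
    · rw [h] at h2; norm_num at h2
      exact composite_step (p := 3) (kc := 1) (ac := 2) (by norm_num) hK3 (by clear * - h2; omega) (by norm_num) (le_trans (by norm_num) hNbig)
    · rw [h] at h2; norm_num at h2
      exact composite_step (p := 5) (kc := 4) (ac := 1) (by norm_num) hK5 (by clear * - h2; omega) (by norm_num) (le_trans (by norm_num) hNbig)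
    · rw [h] at h2; norm_num at h2
      exact composite_step (p := 3) (kc := 1) (ac := 2) (by norm_num) hK3 (by clear * - h2; omega) (by norm_num) (le_trans (by norm_num) hNbig)
    · rw [h] at h2; norm_num at h2
      exact composite_step (p := 241) (kc := 177) (ac := 177) (by norm_num) hK241 (by clear * - h2; omega) (by norm_num) (le_trans (by norm_num) hNbig)
    · rw [h] at h2; norm_num at h2
      exact composite_step (p := 3) (kc := 1) (ac := 2) (by norm_num) hK3 (by clear * - h2; omega) (by norm_num) (le_trans (by norm_num) hNbig)
    · rw [h] at h2; norm_num at h2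
      exact composite_step (p := 5) (kc := 4) (ac := 1) (by norm_num) hK5 (by clear * - h2; omega) (by norm_num) (le_trans (by norm_num) hNbig)
    · rw [h] at h2; norm_num at h2
      exact composite_step (p := 3) (kc := 1) (ac := 2) (by norm_num) hK3 (by clear * - h2; omega) (by norm_num) (le_trans (by norm_num) hNbig)
    · rw [h] at h2; norm_num at h2
      exact composite_step (p := 7) (kc := 3) (ac := 2) (by norm_num) hK7 (by clear * - h2; omega) (by norm_num) (le_trans (by norm_num) hNbig)
    · rw [h] at h2; norm_num at h2
      exact composite_step (p := 3) (kc := 1) (ac := 2) (by norm_num) hK3 (by clear * - h2; omega) (by norm_num) (le_trans (by norm_num) hNbig)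

/-- For every positive integer `t` with `t ≡ 131 (mod 2730)` or
`t ≡ 1361 (mod 2730)`, the integer `659·(2^{12t} − 1)/(2^{12} − 1)` (the 2-repstring
consisting of the 10-bit binary string of 659 followed by two zeros, repeated `t` times)
is a Sierpiński number. -/
theorem stmt_16 (t : ℕ) (ht : 0 < t)
    (hmod : t ≡ 131 [MOD 2730] ∨ t ≡ 1361 [MOD 2730]) :
    IsSierpinski (659 * ((2 ^ (12 * t) - 1) / (2 ^ 12 - 1))) := by
  have hmod' : t % 2730 = 131 ∨ t % 2730 = 1361 := by
    rcases hmod with h | h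
    · left; have := h; unfold Nat.ModEq at this; omega
    · right; have := h; unfold Nat.ModEq at this; omega
  have htodd : t % 2 = 1 := by omega
  have key : 4095 * (∑ i ∈ Finset.range t, 4096^i) = 4096^t - 1 := geom_aux t
  have hX : 4096 ≤ 4096^t := Nat.le_self_pow ht.ne' 4096
  have h2d : (2:ℕ) ∣ 4096^t := dvd_pow (by norm_num) ht.ne'
  have hdiv : (2 ^ (12 * t) - 1) / (2 ^ 12 - 1) = ∑ i ∈ Finset.range t, 4096^i := by
    have e12 : (2:ℕ)^(12*t) = 4096^t := by rw [pow_mul]; norm_num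
    rw [e12, show (2:ℕ)^12 - 1 = 4095 from by norm_num]
    exact Nat.div_eq_of_eq_mul_left (by norm_num) (by rw [← key]; ring)
  rw [hdiv]
  have hSS : 1 ≤ (∑ i ∈ Finset.range t, 4096^i) ∧
      (∑ i ∈ Finset.range t, 4096^i) % 2 = 1 := by
    generalize (∑ i ∈ Finset.range t, 4096^i) = S at key ⊢
    generalize (4096:ℕ)^t = X at key hX h2d
    omega
  have hm2 : (∑ i ∈ Finset.range t, 4096^i) % 4097 = 1 := by
    obtain ⟨m, hm⟩ : ∃ m, t = 2*m+1 := ⟨t/2, by omega⟩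
    rw [hm]; exact sum_odd_mod_4097 m
  exact sierpinski_core _ t hSS.1 hSS.2 (sum_mod_4095 t) hm2 hmod'
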